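/- arXiv:1909.08860 — 2 statements merged into one kernel-verified Lean document; each statement's English description precedes it below -/
import Mathlib

section
/- The planar winding map w(r,θ) = (r/√2, 2θ) in polar coordinates, i.e. w(z) = z²/(√2·|z|) for z ≠ 0 and w(0) = 0, satisfies the length distortion bounds: for every rectifiable path α in ℝ² ≅ ℂ, (1/√2)·ℓ(α) ≤ ℓ(w ∘ α) ≤ √2·ℓ(α). -/
open Set Metric

/-- The planar winding map `w(z) = z²/(√2·|z|)` for `z ≠ 0`, `w 0 = 0`. -/
noncomputable def windingMap (z : ℂ) : ℂ :=
  if z = 0 then 0 else z ^ 2 / ((Real.sqrt 2 : ℂ) * (‖z‖ : ℂ))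

open Complex in
private lemma le_of_sq {a b : ℝ} (hb : 0 ≤ b) (h : a^2 ≤ b^2) : a ≤ b := by
  nlinarith [sq_nonneg (a - b), sq_nonneg (a + b)]

private lemma keyP_upper (r s P I : ℝ) (hr : 0 ≤ r) (hs : 0 ≤ s)
    (hPI : P^2 + I^2 = r^2*s^2) :
    r^2*s^2*(r^2+s^2) - 2*(r*s)*(P^2-I^2) ≤ 4*(r^2*s^2)*(r^2+s^2-2*P) := by
  have h2 : P^2 - I^2 = 2*P^2 - r^2*s^2 := by linarith
  rw [h2]
  nlinarith [sq_nonneg (r*s*(r-s)), mul_nonneg (mul_nonneg hr hs) (sq_nonneg (P - r*s))]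

private lemma keyP_lower_pos (r s P I : ℝ) (hr : 0 ≤ r) (hs : 0 ≤ s) (hP : 0 ≤ P)
    (hPI : P^2 + I^2 = r^2*s^2) :
    r^2*s^2*(r^2+s^2-2*P) ≤ r^2*s^2*(r^2+s^2) - 2*(r*s)*(P^2-I^2) := by
  have h2 : P^2 - I^2 = 2*P^2 - r^2*s^2 := by linarith
  rw [h2]
  have hPm : P ≤ r*s := by
    nlinarith [sq_nonneg I, sq_nonneg (r*s - P), sq_nonneg (r*s + P), mul_nonneg hr hs]
  nlinarith [mul_nonneg (mul_nonneg hr hs)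
    (mul_nonneg (sub_nonneg.2 hPm) (by positivity : (0:ℝ) ≤ 2*P + r*s))]

private lemma keyP_lower_neg (r s P I : ℝ) (hr : 0 ≤ r) (hs : 0 ≤ s) (hP : P ≤ 0)
    (hPI : P^2 + I^2 = r^2*s^2) :
    r^2*s^2*(r^2+s^2+2*P) ≤ r^2*s^2*(r^2+s^2) - 2*(r*s)*(P^2-I^2) := by
  have := keyP_lower_pos r s (-P) I hr hs (by linarith) (by nlinarith)
  nlinarith [this]

private lemma norm_sq_eq_normSq (w : ℂ) : ‖w‖^2 = Complex.normSq w := by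
  rw [Complex.sq_norm]

private lemma D_bounds (z z' : ℂ) (hz : z ≠ 0) (hz' : z' ≠ 0) :
    ‖z^2 * (‖z'‖ : ℂ) - z'^2 * (‖z‖ : ℂ)‖ ≤ 2*(‖z‖*‖z'‖)*‖z - z'‖ ∧
    (‖z‖*‖z'‖) * min ‖z - z'‖ ‖z + z'‖ ≤ ‖z^2 * (‖z'‖ : ℂ) - z'^2 * (‖z‖ : ℂ)‖ := by
  set r := ‖z‖ with hrdef
  set s := ‖z'‖ with hsdef
  set c := z * (starRingEnd ℂ) z' with hcdef
  have hr : 0 ≤ r := norm_nonneg z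
  have hs : 0 ≤ s := norm_nonneg z'
  have hnz : Complex.normSq z = r^2 := (norm_sq_eq_normSq z).symm
  have hnz' : Complex.normSq z' = s^2 := (norm_sq_eq_normSq z').symm
  have hPI : c.re^2 + c.im^2 = r^2*s^2 := by
    have h1 : Complex.normSq c = r^2 * s^2 := by
      rw [hcdef, Complex.normSq_mul, Complex.normSq_conj, hnz, hnz']
    rw [← h1, Complex.normSq_apply]; ring
  have hsub : ‖z - z'‖^2 = r^2 + s^2 - 2*c.re := by
    rw [norm_sq_eq_normSq, Complex.normSq_sub, hnz, hnz', hcdef]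
  have hadd : ‖z + z'‖^2 = r^2 + s^2 + 2*c.re := by
    rw [norm_sq_eq_normSq, Complex.normSq_add, hnz, hnz', hcdef]
  have hD : ‖z^2 * (s : ℂ) - z'^2 * (r : ℂ)‖^2
      = r^2*s^2*(r^2+s^2) - 2*(r*s)*(c.re^2 - c.im^2) := by
    rw [norm_sq_eq_normSq, Complex.normSq_sub]
    have e1 : Complex.normSq (z^2 * (s:ℂ)) = r^4 * s^2 := by
      rw [Complex.normSq_mul, Complex.normSq_ofReal, pow_two, Complex.normSq_mul, hnz]; ring
    have e2 : Complex.normSq (z'^2 * (r:ℂ)) = s^4 * r^2 := by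
      rw [Complex.normSq_mul, Complex.normSq_ofReal, pow_two, Complex.normSq_mul, hnz']; ring
    have e3 : z^2 * (s:ℂ) * (starRingEnd ℂ) (z'^2 * (r:ℂ)) = c^2 * ((r*s : ℝ) : ℂ) := by
      simp only [map_mul, map_pow, Complex.conj_ofReal, hcdef]
      push_cast
      ring
    have e4 : (z^2 * (s:ℂ) * (starRingEnd ℂ) (z'^2 * (r:ℂ))).re = (c.re^2 - c.im^2) * (r*s) := by
      rw [e3]
      have : (c^2).re = c.re^2 - c.im^2 := by
        rw [pow_two, Complex.mul_re]; ring
      simp [Complex.mul_re, this]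
    rw [e1, e2, e4]; ring
  constructor
  · apply le_of_sq (by positivity)
    rw [hD]
    calc r^2*s^2*(r^2+s^2) - 2*(r*s)*(c.re^2 - c.im^2)
        ≤ 4*(r^2*s^2)*(r^2+s^2-2*c.re) := keyP_upper r s c.re c.im hr hs hPI
      _ = (2*(r*s)*‖z - z'‖)^2 := by rw [mul_pow, mul_pow, hsub]; ring
  · rcases le_or_gt 0 c.re with hP | hP
    · have hmin : min ‖z - z'‖ ‖z + z'‖ = ‖z - z'‖ :=
        min_eq_left (le_of_sq (norm_nonneg _) (by rw [hsub, hadd]; linarith))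
      rw [hmin]
      apply le_of_sq (norm_nonneg _)
      rw [hD, mul_pow, mul_pow, hsub]
      nlinarith [keyP_lower_pos r s c.re c.im hr hs hP hPI]
    · have hmin : min ‖z - z'‖ ‖z + z'‖ = ‖z + z'‖ :=
        min_eq_right (le_of_sq (norm_nonneg _) (by rw [hsub, hadd]; linarith))
      rw [hmin]
      apply le_of_sq (norm_nonneg _)
      rw [hD, mul_pow, mul_pow, hadd]
      nlinarith [keyP_lower_neg r s c.re c.im hr hs hP.le hPI]

private lemma sqrt_two_mul_self : Real.sqrt 2 * Real.sqrt 2 = 2 :=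
  Real.mul_self_sqrt (by norm_num)

private lemma windingMap_zero : windingMap 0 = 0 := by simp [windingMap]

private lemma norm_windingMap (z : ℂ) : ‖windingMap z‖ = ‖z‖ / Real.sqrt 2 := by
  by_cases hz : z = 0
  · simp [hz, windingMap]
  · have hr : (0:ℝ) < ‖z‖ := norm_pos_iff.2 hz
    have h2 : (0:ℝ) < Real.sqrt 2 := by positivity
    rw [windingMap, if_neg hz, norm_div, norm_pow, norm_mul, Complex.norm_real,
      Complex.norm_real, Real.norm_eq_abs, Real.norm_eq_abs, _root_.abs_of_nonneg h2.le,
      _root_.abs_of_nonneg hr.le]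
    have hz0 : ‖z‖ ≠ 0 := norm_ne_zero_iff.2 hz
    have h20 : Real.sqrt 2 ≠ 0 := ne_of_gt h2
    field_simp

private lemma windingMap_sub (z z' : ℂ) (hz : z ≠ 0) (hz' : z' ≠ 0) :
    windingMap z - windingMap z'
      = (z^2 * (‖z'‖ : ℂ) - z'^2 * (‖z‖ : ℂ)) / (((Real.sqrt 2 : ℝ) : ℂ) * (‖z‖ : ℂ) * (‖z'‖ : ℂ)) := by
  have hr : ((‖z‖ : ℝ) : ℂ) ≠ 0 :=
    Complex.ofReal_ne_zero.2 (norm_ne_zero_iff.2 hz)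
  have hs : ((‖z'‖ : ℝ) : ℂ) ≠ 0 :=
    Complex.ofReal_ne_zero.2 (norm_ne_zero_iff.2 hz')
  have h2 : ((Real.sqrt 2 : ℝ) : ℂ) ≠ 0 := by
    simpa using (by positivity : Real.sqrt 2 ≠ 0)
  rw [windingMap, windingMap, if_neg hz, if_neg hz']
  field_simp

private lemma norm_denom (z z' : ℂ) :
    ‖((Real.sqrt 2 : ℝ) : ℂ) * (‖z‖ : ℂ) * (‖z'‖ : ℂ)‖ = Real.sqrt 2 * (‖z‖ * ‖z'‖) := by
  rw [norm_mul, norm_mul, Complex.norm_real, Complex.norm_real, Complex.norm_real,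
    Real.norm_eq_abs, Real.norm_eq_abs, Real.norm_eq_abs,
    _root_.abs_of_nonneg (Real.sqrt_nonneg 2), _root_.abs_of_nonneg (norm_nonneg z),
    _root_.abs_of_nonneg (norm_nonneg z'), mul_assoc]

private lemma windingMap_upper (z z' : ℂ) :
    ‖windingMap z - windingMap z'‖ ≤ Real.sqrt 2 * ‖z - z'‖ := by
  have h2 : (0:ℝ) < Real.sqrt 2 := by positivity
  by_cases hz : z = 0
  · subst hz
    rw [windingMap_zero, zero_sub, norm_neg, norm_windingMap, zero_sub, norm_neg]
    rw [div_le_iff₀ h2]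
    nlinarith [sqrt_two_mul_self, norm_nonneg z']
  by_cases hz' : z' = 0
  · subst hz'
    rw [windingMap_zero, sub_zero, norm_windingMap, sub_zero]
    rw [div_le_iff₀ h2]
    nlinarith [sqrt_two_mul_self, norm_nonneg z]
  · have hr : (0:ℝ) < ‖z‖ := norm_pos_iff.2 hz
    have hs : (0:ℝ) < ‖z'‖ := norm_pos_iff.2 hz'
    rw [windingMap_sub z z' hz hz', norm_div, norm_denom, div_le_iff₀ (by positivity)]
    calc ‖z^2 * (‖z'‖ : ℂ) - z'^2 * (‖z‖ : ℂ)‖ ≤ 2*(‖z‖*‖z'‖)*‖z - z'‖ :=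
          (D_bounds z z' hz hz').1
      _ = Real.sqrt 2 * ‖z - z'‖ * (Real.sqrt 2 * (‖z‖ * ‖z'‖)) := by
          linear_combination (-(‖z - z'‖ * (‖z‖ * ‖z'‖))) * sqrt_two_mul_self

private lemma windingMap_lower (z z' : ℂ) :
    min ‖z - z'‖ ‖z + z'‖ ≤ Real.sqrt 2 * ‖windingMap z - windingMap z'‖ := by
  have h2 : (0:ℝ) < Real.sqrt 2 := by positivity
  by_cases hz : z = 0
  · subst hz
    simp only [windingMap_zero, zero_sub, norm_neg, norm_windingMap, zero_add]
    have : Real.sqrt 2 * (‖z'‖ / Real.sqrt 2) = ‖z'‖ := by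
      field_simp
    rw [this]
    exact min_le_right _ _
  by_cases hz' : z' = 0
  · subst hz'
    simp only [windingMap_zero, sub_zero, norm_windingMap, add_zero]
    have : Real.sqrt 2 * (‖z‖ / Real.sqrt 2) = ‖z‖ := by field_simp
    rw [this]
    exact min_le_left _ _
  · have hr : (0:ℝ) < ‖z‖ := norm_pos_iff.2 hz
    have hs : (0:ℝ) < ‖z'‖ := norm_pos_iff.2 hz'
    rw [windingMap_sub z z' hz hz', norm_div, norm_denom]
    rw [show Real.sqrt 2 * (‖z^2 * (‖z'‖ : ℂ) - z'^2 * (‖z‖ : ℂ)‖ / (Real.sqrt 2 * (‖z‖ * ‖z'‖)))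
        = ‖z^2 * (‖z'‖ : ℂ) - z'^2 * (‖z‖ : ℂ)‖ / (‖z‖ * ‖z'‖) by
      rw [← mul_div_assoc, mul_div_mul_left _ _ (ne_of_gt h2)]]
    rw [le_div_iff₀ (by positivity)]
    calc min ‖z - z'‖ ‖z + z'‖ * (‖z‖ * ‖z'‖) = (‖z‖*‖z'‖) * min ‖z - z'‖ ‖z + z'‖ := by ring
      _ ≤ _ := (D_bounds z z' hz hz').2

private lemma two_chain (β : ℝ → ℂ) {s t u : ℝ} (hu : u ∈ Icc s t) (hst : s ≤ t) :
    edist (β s) (β u) + edist (β u) (β t) ≤ eVariationOn β (Icc s t) := by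
  classical
  set v : ℕ → ℝ := fun k => if k = 0 then s else if k = 1 then u else t with hv
  have hmono : Monotone v := by
    apply monotone_nat_of_le_succ
    intro n
    match n with
    | 0 => simpa [hv] using hu.1
    | 1 => simpa [hv] using hu.2
    | (n+2) => simp [hv]
  have hmem : ∀ i, v i ∈ Icc s t := by
    intro i
    match i with
    | 0 => simpa [hv] using left_mem_Icc.2 hst
    | 1 => simpa [hv] using hu
    | (n+2) => simpa [hv] using right_mem_Icc.2 hst
  have h := eVariationOn.sum_le (f := β) (n := 2) hmono hmem
  simp only [Finset.sum_range_succ, Finset.sum_range_zero, zero_add, hv] at h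
  norm_num at h
  calc edist (β s) (β u) + edist (β u) (β t)
      = edist (β u) (β s) + edist (β t) (β u) := by rw [edist_comm, edist_comm (β u) (β t)]
    _ ≤ _ := h

private lemma seg_lemma (α : ℝ → ℂ) (hα : ContinuousOn α (Icc 0 1)) {s t : ℝ}
    (hs : s ∈ Icc (0:ℝ) 1) (ht : t ∈ Icc (0:ℝ) 1) (hst : s ≤ t) :
    edist (α s) (α t) ≤
      ENNReal.ofReal (Real.sqrt 2) * eVariationOn (windingMap ∘ α) (Icc s t) := by
  have hkey : ∃ u ∈ Icc s t, ‖α s - α t‖ ≤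
      Real.sqrt 2 * ‖windingMap (α s) - windingMap (α u)‖
      + Real.sqrt 2 * ‖windingMap (α u) - windingMap (α t)‖ := by
    by_cases hP : 0 ≤ (α s * (starRingEnd ℂ) (α t)).re
    · refine ⟨t, right_mem_Icc.2 hst, ?_⟩
      have h1 : ‖α s - α t‖ ≤ ‖α s + α t‖ := by
        apply le_of_sq (norm_nonneg _)
        rw [norm_sq_eq_normSq, norm_sq_eq_normSq, Complex.normSq_sub, Complex.normSq_add]
        linarith
      have h2 := windingMap_lower (α s) (α t)
      rw [min_eq_left h1] at h2
      have h3 : (0:ℝ) ≤ Real.sqrt 2 * ‖windingMap (α t) - windingMap (α t)‖ := by positivity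
      linarith
    · push_neg at hP
      have hαst : ContinuousOn α (Icc s t) := hα.mono (Icc_subset_Icc hs.1 ht.2)
      have hgc : ContinuousOn (fun x => (α s * (starRingEnd ℂ) (α x)).re) (Icc s t) := by
        exact (Complex.continuous_re.comp
          (continuous_const.mul Complex.continuous_conj)).comp_continuousOn hαst
      have h0mem : (0:ℝ) ∈ Icc ((fun x => (α s * (starRingEnd ℂ) (α x)).re) t)
          ((fun x => (α s * (starRingEnd ℂ) (α x)).re) s) := by
        constructor
        · exact hP.le
        · simp only [Complex.mul_conj]
          simpa using Complex.normSq_nonneg (α s)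
      obtain ⟨u, humem, hgu⟩ := intermediate_value_Icc' hst hgc h0mem
      refine ⟨u, humem, ?_⟩
      have hgu' : (α s * (starRingEnd ℂ) (α u)).re = 0 := hgu
      have hEq : ‖α s - α u‖ = ‖α s + α u‖ := by
        have e : ‖α s - α u‖^2 = ‖α s + α u‖^2 := by
          rw [norm_sq_eq_normSq, norm_sq_eq_normSq, Complex.normSq_sub, Complex.normSq_add, hgu']
          ring
        have e2 := congrArg Real.sqrt e
        rwa [Real.sqrt_sq (norm_nonneg _), Real.sqrt_sq (norm_nonneg _)] at e2
      have k1 := windingMap_lower (α s) (α u)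
      have k2 := windingMap_lower (α u) (α t)
      rw [min_eq_left (le_of_eq hEq)] at k1
      have tri : ‖α s - α t‖ ≤ ‖α s - α u‖ + min ‖α u - α t‖ ‖α u + α t‖ := by
        rcases le_total ‖α u - α t‖ ‖α u + α t‖ with h | h
        · rw [min_eq_left h]
          calc ‖α s - α t‖ = ‖(α s - α u) + (α u - α t)‖ := by rw [sub_add_sub_cancel]
            _ ≤ ‖α s - α u‖ + ‖α u - α t‖ := norm_add_le _ _
        · rw [min_eq_right h, hEq]
          calc ‖α s - α t‖ = ‖(α s + α u) - (α u + α t)‖ := by congr 1; ring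
            _ ≤ ‖α s + α u‖ + ‖α u + α t‖ := norm_sub_le _ _
      linarith
  obtain ⟨u, hu, hle⟩ := hkey
  calc edist (α s) (α t) = ENNReal.ofReal ‖α s - α t‖ := by rw [edist_dist, dist_eq_norm]
    _ ≤ ENNReal.ofReal (Real.sqrt 2 * ‖windingMap (α s) - windingMap (α u)‖
        + Real.sqrt 2 * ‖windingMap (α u) - windingMap (α t)‖) := ENNReal.ofReal_le_ofReal hle
    _ = ENNReal.ofReal (Real.sqrt 2) *
        (edist ((windingMap ∘ α) s) ((windingMap ∘ α) u)
          + edist ((windingMap ∘ α) u) ((windingMap ∘ α) t)) := by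
        rw [ENNReal.ofReal_add (by positivity) (by positivity),
          ENNReal.ofReal_mul (Real.sqrt_nonneg 2), ENNReal.ofReal_mul (Real.sqrt_nonneg 2),
          mul_add]
        congr 2 <;> rw [edist_dist, dist_eq_norm] <;> rfl
    _ ≤ ENNReal.ofReal (Real.sqrt 2) * eVariationOn (windingMap ∘ α) (Icc s t) :=
        mul_le_mul_right (two_chain _ hu hst) _

/-- The winding map satisfies the length distortion bounds
`(1/√2)·ℓ(α) ≤ ℓ(w∘α) ≤ √2·ℓ(α)` for every rectifiable path `α`. -/
theorem windingMap_length_distortion (α : ℝ → ℂ)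
    (hα : ContinuousOn α (Icc 0 1)) :
    ENNReal.ofReal (Real.sqrt 2)⁻¹ * eVariationOn α (Icc 0 1) ≤
        eVariationOn (windingMap ∘ α) (Icc 0 1) ∧
      eVariationOn (windingMap ∘ α) (Icc 0 1) ≤
        ENNReal.ofReal (Real.sqrt 2) * eVariationOn α (Icc 0 1) := by
  constructor
  · -- lower bound
    have hlow : eVariationOn α (Icc 0 1) ≤
        ENNReal.ofReal (Real.sqrt 2) * eVariationOn (windingMap ∘ α) (Icc 0 1) := by
      apply iSup_le
      rintro ⟨n, u, hu, us⟩
      have chain : ∀ m : ℕ,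
          ∑ i ∈ Finset.range m, eVariationOn (windingMap ∘ α) (Icc (u i) (u (i+1)))
            ≤ eVariationOn (windingMap ∘ α) (Icc (u 0) (u m)) := by
        intro m
        induction m with
        | zero => simp
        | succ m ih =>
          rw [Finset.sum_range_succ]
          have hadd := eVariationOn.Icc_add_Icc (windingMap ∘ α) (s := univ)
            (hu (Nat.zero_le m)) (hu (Nat.le_succ m)) (mem_univ (u m))
          simp only [univ_inter] at hadd
          calc _ ≤ eVariationOn (windingMap ∘ α) (Icc (u 0) (u m))
                + eVariationOn (windingMap ∘ α) (Icc (u m) (u (m+1))) := add_le_add_left ih _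
            _ = _ := hadd
      calc ∑ i ∈ Finset.range n, edist (α (u (i+1))) (α (u i))
          ≤ ∑ i ∈ Finset.range n,
            ENNReal.ofReal (Real.sqrt 2) * eVariationOn (windingMap ∘ α) (Icc (u i) (u (i+1))) := by
            refine Finset.sum_le_sum fun i _ => ?_
            rw [edist_comm]
            exact seg_lemma α hα (us i) (us (i+1)) (hu (Nat.le_succ i))
        _ = ENNReal.ofReal (Real.sqrt 2) *
            ∑ i ∈ Finset.range n, eVariationOn (windingMap ∘ α) (Icc (u i) (u (i+1))) :=
            (Finset.mul_sum _ _ _).symm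
        _ ≤ ENNReal.ofReal (Real.sqrt 2) * eVariationOn (windingMap ∘ α) (Icc 0 1) := by
            refine mul_le_mul_right ((chain n).trans ?_) _
            exact eVariationOn.mono _ (Icc_subset_Icc (us 0).1 (us n).2)
    have hC0 : ENNReal.ofReal (Real.sqrt 2) ≠ 0 :=
      ne_of_gt (ENNReal.ofReal_pos.2 (by positivity))
    rw [ENNReal.ofReal_inv_of_pos (by positivity : (0:ℝ) < Real.sqrt 2)]
    calc (ENNReal.ofReal (Real.sqrt 2))⁻¹ * eVariationOn α (Icc 0 1)
        ≤ (ENNReal.ofReal (Real.sqrt 2))⁻¹ *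
          (ENNReal.ofReal (Real.sqrt 2) * eVariationOn (windingMap ∘ α) (Icc 0 1)) :=
          mul_le_mul_right hlow _
      _ = eVariationOn (windingMap ∘ α) (Icc 0 1) := by
          rw [← mul_assoc, ENNReal.inv_mul_cancel hC0 ENNReal.ofReal_ne_top, one_mul]
  · -- upper bound
    have hlip : LipschitzWith (Real.toNNReal (Real.sqrt 2)) windingMap := by
      apply LipschitzWith.of_dist_le_mul
      intro a b
      rw [dist_eq_norm, dist_eq_norm, Real.coe_toNNReal _ (Real.sqrt_nonneg 2)]
      exact windingMap_upper a b
    have h := (hlip.lipschitzOnWith (s := univ)).comp_eVariationOn_le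
      (mapsTo_univ α (Icc (0:ℝ) 1))
    simpa [ENNReal.ofReal] using h
end

section
/- Let h : Sⁿ⁻¹ → Sⁿ⁻¹ (n ≥ 2) be defined from a map g : ℝⁿ → ℝⁿ satisfying L⁻¹‖x‖ ≤ ‖g(x)‖ ≤ L‖x‖ and whose restriction to the sphere ∂B(0,r) is L-Lipschitz, by h(x) = (L/r)·p(g(rx)) where p is the radial projection onto ∂B(0, r/L). Then h is L²-Lipschitz. -/
open Set Metric

lemma aux_radial {E : Type*} [NormedAddCommGroup E] [InnerProductSpace ℝ E]
    (a b : E) (ρ : ℝ) (hρ : 0 < ρ) (ha : ρ ≤ ‖a‖) (hb : ρ ≤ ‖b‖) :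
    ρ * ‖‖a‖⁻¹ • a - ‖b‖⁻¹ • b‖ ≤ ‖a - b‖ := by
  have ha0 : (0:ℝ) < ‖a‖ := lt_of_lt_of_le hρ ha
  have hb0 : (0:ℝ) < ‖b‖ := lt_of_lt_of_le hρ hb
  set t : ℝ := inner ℝ a b with ht
  have cs : t ≤ ‖a‖ * ‖b‖ := real_inner_le_norm a b
  have h1 : ‖‖a‖⁻¹ • a - ‖b‖⁻¹ • b‖ ^ 2 = 2 - 2 * (‖a‖⁻¹ * ‖b‖⁻¹ * t) := by
    rw [norm_sub_sq_real, real_inner_smul_left, real_inner_smul_right,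
      norm_smul, norm_smul]
    simp [abs_of_pos, ha0, hb0, inv_mul_cancel₀ ha0.ne', inv_mul_cancel₀ hb0.ne']
    ring
  have h2 : ‖a - b‖ ^ 2 = ‖a‖ ^ 2 - 2 * t + ‖b‖ ^ 2 := norm_sub_sq_real a b
  have hsq : (ρ * ‖‖a‖⁻¹ • a - ‖b‖⁻¹ • b‖) ^ 2 ≤ ‖a - b‖ ^ 2 := by
    rw [mul_pow, h1, h2]
    have hs : ‖a‖⁻¹ * ‖b‖⁻¹ * t ≤ 1 := by
      have h := (div_le_one (show (0:ℝ) < ‖a‖ * ‖b‖ by positivity)).mpr cs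
      have he : ‖a‖⁻¹ * ‖b‖⁻¹ * t = t / (‖a‖ * ‖b‖) := by
        rw [div_eq_mul_inv, mul_inv]; ring
      rw [he]; exact h
    have hteq : t = (‖a‖⁻¹ * ‖b‖⁻¹ * t) * (‖a‖ * ‖b‖) := by
      field_simp
    set s : ℝ := ‖a‖⁻¹ * ‖b‖⁻¹ * t with hsdef
    rw [hteq]
    nlinarith [sq_nonneg (‖a‖ - ‖b‖), mul_nonneg (sub_nonneg.2 hs)
      (sub_nonneg.2 (mul_le_mul ha hb hρ.le ha0.le)), sq_nonneg ρ]
  have := Real.sqrt_le_sqrt hsq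
  rwa [Real.sqrt_sq (by positivity), Real.sqrt_sq (norm_nonneg _)] at this

/-- If `g` satisfies `L⁻¹‖x‖ ≤ ‖g x‖ ≤ L‖x‖` and is `L`-Lipschitz on the sphere
`∂B(0,r)`, then the map `h(x) = (L/r)·p(g(r·x))` of the unit sphere, where `p` is the
radial projection onto `∂B(0, r/L)`, is `L²`-Lipschitz. -/
theorem sphereMap_Lsq_lipschitz {n : ℕ} (hn : 2 ≤ n)
    (g : EuclideanSpace ℝ (Fin n) → EuclideanSpace ℝ (Fin n))
    (L r : ℝ) (hL : 1 ≤ L) (hr : 0 < r)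
    (hlow : ∀ x, L⁻¹ * ‖x‖ ≤ ‖g x‖) (hup : ∀ x, ‖g x‖ ≤ L * ‖x‖)
    (hlip : LipschitzOnWith (Real.toNNReal L) g (sphere (0 : EuclideanSpace ℝ (Fin n)) r)) :
    LipschitzOnWith (Real.toNNReal (L ^ 2))
      (fun x => (L / r) • ((r / L) • (‖g (r • x)‖⁻¹ • g (r • x))))
      (sphere (0 : EuclideanSpace ℝ (Fin n)) 1) := by
  have hL0 : (0:ℝ) < L := lt_of_lt_of_le one_pos hL
  rw [lipschitzOnWith_iff_dist_le_mul]
  intro x hx y hy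
  rw [Real.coe_toNNReal _ (by positivity)]
  have hx1 : ‖x‖ = 1 := by simpa using hx
  have hy1 : ‖y‖ = 1 := by simpa using hy
  have hxs : r • x ∈ sphere (0 : EuclideanSpace ℝ (Fin n)) r := by
    simp [norm_smul, hx1, abs_of_pos hr]
  have hys : r • y ∈ sphere (0 : EuclideanSpace ℝ (Fin n)) r := by
    simp [norm_smul, hy1, abs_of_pos hr]
  set a := g (r • x) with hadef
  set b := g (r • y) with hbdef
  have hna : r / L ≤ ‖a‖ := by
    have := hlow (r • x)
    rw [norm_smul, hx1] at this
    simpa [abs_of_pos hr, div_eq_inv_mul] using this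
  have hnb : r / L ≤ ‖b‖ := by
    have := hlow (r • y)
    rw [norm_smul, hy1] at this
    simpa [abs_of_pos hr, div_eq_inv_mul] using this
  have hρ : (0:ℝ) < r / L := by positivity
  have hab : ‖a - b‖ ≤ L * (r * dist x y) := by
    have h := (lipschitzOnWith_iff_dist_le_mul.mp hlip) _ hxs _ hys
    rw [Real.coe_toNNReal _ hL0.le] at h
    have hd : dist (r • x) (r • y) = r * dist x y := by
      rw [dist_smul₀, Real.norm_eq_abs, abs_of_pos hr]
    rw [hd] at h
    simpa [dist_eq_norm] using h
  have hkey := aux_radial a b (r / L) hρ hna hnb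
  have hsimp : ∀ v : EuclideanSpace ℝ (Fin n), (L / r) • ((r / L) • v) = v := by
    intro v
    rw [smul_smul, div_mul_div_comm, mul_comm L r, div_self (by positivity), one_smul]
  simp only [hsimp]
  rw [dist_eq_norm]
  have h1 : ‖‖a‖⁻¹ • a - ‖b‖⁻¹ • b‖ ≤ (L / r) * ‖a - b‖ := by
    have h2 : ‖‖a‖⁻¹ • a - ‖b‖⁻¹ • b‖
        = (L / r) * ((r / L) * ‖‖a‖⁻¹ • a - ‖b‖⁻¹ • b‖) := by
      field_simp
    rw [h2]
    exact mul_le_mul_of_nonneg_left hkey (by positivity)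
  calc ‖‖a‖⁻¹ • a - ‖b‖⁻¹ • b‖ ≤ (L / r) * ‖a - b‖ := h1
    _ ≤ (L / r) * (L * (r * dist x y)) := by
        exact mul_le_mul_of_nonneg_left hab (by positivity)
    _ = L ^ 2 * dist x y := by field_simp
end
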